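/- Let R be a commutative ring, G_yu a p×m matrix and G_yv a p×k matrix over R. Define the stacked matrices G_{(y,v)u} := fromRows(G_yu, 0) (a (p+k)×m matrix), G_{(y,v)v} := fromRows(G_yv, I_k) (a (p+k)×k matrix), and the output rectifier R₀ := fromColumns(I_p, −G_yv) (a p×(p+k) matrix). For an m×(p+k) matrix K over R, the following are equivalent: (i) there exists an m×(p+k) matrix Q over R with det(1 + Q·G_{(y,v)u}) a unit, K = (1 + Q·G_{(y,v)u})⁻¹·Q, and Q·G_{(y,v)v} = 0; (ii) there exists an m×p matrix Q̂ over R with det(1 + Q̂·G_yu) a unit and K = ((1 + Q̂·G_yu)⁻¹·Q̂)·R₀. -/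

import Mathlib

open Matrix

/-- Proposition 1 of the paper: `K` is an output-rectifying retrofit controller (a Youla
controller for the augmented plant whose parameter annihilates `G_{(y,v)v}`) iff
`K = K̂ R₀` where `K̂` is a Youla-parameterized controller for `G_yu` and
`R₀ = fromCols(I, -G_yv)` is the output rectifier. -/
theorem stmt_11 (R : Type*) [CommRing R] (p m k : ℕ)
    (Gyu : Matrix (Fin p) (Fin m) R) (Gyv : Matrix (Fin p) (Fin k) R)
    (K : Matrix (Fin m) (Fin p ⊕ Fin k) R) :
    (∃ Q : Matrix (Fin m) (Fin p ⊕ Fin k) R,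
        IsUnit (1 + Q * Matrix.fromRows Gyu (0 : Matrix (Fin k) (Fin m) R)).det ∧
        K = (1 + Q * Matrix.fromRows Gyu (0 : Matrix (Fin k) (Fin m) R))⁻¹ * Q ∧
        Q * Matrix.fromRows Gyv (1 : Matrix (Fin k) (Fin k) R) = 0) ↔
      (∃ Qhat : Matrix (Fin m) (Fin p) R,
        IsUnit (1 + Qhat * Gyu).det ∧
        K = ((1 + Qhat * Gyu)⁻¹ * Qhat)
              * Matrix.fromCols (1 : Matrix (Fin p) (Fin p) R) (-Gyv)) := by
  constructor
  · rintro ⟨Q, hu, hK, h0⟩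
    refine ⟨Q.toCols₁, ?_, ?_⟩
    · have h1 : Q * Matrix.fromRows Gyu (0 : Matrix (Fin k) (Fin m) R)
          = Q.toCols₁ * Gyu := by
        rw [← Matrix.fromCols_toCols Q, Matrix.fromCols_mul_fromRows,
          Matrix.mul_zero, add_zero, Matrix.toCols₁_fromCols]
      rwa [h1] at hu
    · have h2 : Q.toCols₂ = -(Q.toCols₁ * Gyv) := by
        have := h0
        rw [← Matrix.fromCols_toCols Q, Matrix.fromCols_mul_fromRows,
          Matrix.mul_one] at this
        exact eq_neg_of_add_eq_zero_right this
      have hQ : Q = Q.toCols₁ * Matrix.fromCols (1 : Matrix (Fin p) (Fin p) R) (-Gyv) := by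
        rw [Matrix.mul_fromCols, Matrix.mul_one, Matrix.mul_neg, ← h2,
          Matrix.fromCols_toCols]
      have h1 : Q * Matrix.fromRows Gyu (0 : Matrix (Fin k) (Fin m) R)
          = Q.toCols₁ * Gyu := by
        rw [← Matrix.fromCols_toCols Q, Matrix.fromCols_mul_fromRows,
          Matrix.mul_zero, add_zero, Matrix.toCols₁_fromCols]
      rw [hK, h1, Matrix.mul_assoc, ← hQ]
  · rintro ⟨Qhat, hu, hK⟩
    refine ⟨Qhat * Matrix.fromCols (1 : Matrix (Fin p) (Fin p) R) (-Gyv), ?_, ?_, ?_⟩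
    · rwa [Matrix.mul_assoc, Matrix.fromCols_mul_fromRows, Matrix.mul_zero,
        add_zero, Matrix.one_mul]
    · have haug : Qhat * Matrix.fromCols (1 : Matrix (Fin p) (Fin p) R) (-Gyv)
          * Matrix.fromRows Gyu (0 : Matrix (Fin k) (Fin m) R) = Qhat * Gyu := by
        rw [Matrix.mul_assoc, Matrix.fromCols_mul_fromRows, Matrix.mul_zero,
          add_zero, Matrix.one_mul]
      rw [haug, hK, Matrix.mul_assoc]
    · rw [Matrix.mul_assoc, Matrix.fromCols_mul_fromRows, Matrix.mul_one,
        Matrix.one_mul, add_neg_cancel, Matrix.mul_zero]
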